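/- (Global Lipschitz constant of the Jacobian, linear layer fixed.) Let D > 0 and let V ∈ ℝ^{n×k} be a fixed matrix whose every column has Euclidean norm at most D·√n. For the map W ↦ g(V, W) with derivative J(W) (a linear map ℝ^{k×d} → ℝ^n), one has for all W, W̃ ∈ ℝ^{k×d}: ‖J(W) − J(W̃)‖ ≤ B·D·√(n/k)·‖W − W̃‖_F, where ‖·‖_F is the Frobenius norm. -/

import Mathlib

open MeasureTheory ProbabilityTheory Filter
open scoped Topology NNReal

noncomputable def sigmaMin {E F : Type*} [NormedAddCommGroup E] [InnerProductSpace ℝ E]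
    [CompleteSpace E] [NormedAddCommGroup F] [InnerProductSpace ℝ F] [CompleteSpace F]
    (A : E →L[ℝ] F) : ℝ :=
  ⨅ w : {w : F // ‖w‖ = 1}, ‖ContinuousLinearMap.adjoint A w.1‖

/-- The two-layer DIP network `g(V, W) = (1/√k) V φ(W u)`, with the parameters `(V, W)`
encoded as a single Euclidean (Frobenius) vector. -/
noncomputable def dipNet (n k d : ℕ) (φ : ℝ → ℝ) (u : EuclideanSpace ℝ (Fin d))
    (θ : EuclideanSpace ℝ ((Fin n × Fin k) ⊕ (Fin k × Fin d))) : EuclideanSpace ℝ (Fin n) :=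
  WithLp.toLp 2 fun i => (1 / Real.sqrt k) *
    ∑ j : Fin k, θ (Sum.inl (i, j)) * φ (∑ l : Fin d, θ (Sum.inr (j, l)) * u l)

/-- The two-layer DIP network with the linear layer `V` fixed. -/
noncomputable def dipNetW (n k d : ℕ) (φ : ℝ → ℝ) (u : EuclideanSpace ℝ (Fin d))
    (V : Matrix (Fin n) (Fin k) ℝ) (W : EuclideanSpace ℝ (Fin k × Fin d)) :
    EuclideanSpace ℝ (Fin n) :=
  WithLp.toLp 2 fun i => (1 / Real.sqrt k) *
    ∑ j : Fin k, V i j * φ (∑ l : Fin d, W (j, l) * u l)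

/-- Supremum norm on a Euclidean space. -/
noncomputable def supNorm {m : ℕ} (v : EuclideanSpace ℝ (Fin m)) : ℝ := ⨆ i, |v i|



section aux
variable {n k d : ℕ}

noncomputable def lfun (u : EuclideanSpace ℝ (Fin d)) (j : Fin k) :
    EuclideanSpace ℝ (Fin k × Fin d) →L[ℝ] ℝ :=
  ∑ l : Fin d, u l • (EuclideanSpace.proj ((j, l) : Fin k × Fin d) :
    EuclideanSpace ℝ (Fin k × Fin d) →L[ℝ] ℝ)

lemma lfun_apply (u : EuclideanSpace ℝ (Fin d)) (j : Fin k)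
    (W : EuclideanSpace ℝ (Fin k × Fin d)) :
    lfun u j W = ∑ l : Fin d, W (j, l) * u l := by
  simp [lfun, mul_comm]

noncomputable def Jmap (φ : ℝ → ℝ) (u : EuclideanSpace ℝ (Fin d))
    (V : Matrix (Fin n) (Fin k) ℝ) (W : EuclideanSpace ℝ (Fin k × Fin d)) :
    EuclideanSpace ℝ (Fin k × Fin d) →L[ℝ] EuclideanSpace ℝ (Fin n) :=
  (((PiLp.continuousLinearEquiv 2 ℝ (fun _ : Fin n => ℝ)).symm :
    (∀ _ : Fin n, ℝ) →L[ℝ] EuclideanSpace ℝ (Fin n))).comp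
    (ContinuousLinearMap.pi (fun i =>
      (1 / Real.sqrt k) • ∑ j : Fin k, (V i j * deriv φ (lfun u j W)) • lfun u j))

lemma Jmap_apply (φ : ℝ → ℝ) (u : EuclideanSpace ℝ (Fin d))
    (V : Matrix (Fin n) (Fin k) ℝ) (W H : EuclideanSpace ℝ (Fin k × Fin d)) (i : Fin n) :
    Jmap φ u V W H i =
      (1 / Real.sqrt k) * ∑ j : Fin k, V i j * deriv φ (lfun u j W) * lfun u j H := by
  simp [Jmap, mul_assoc]

end aux

section aux2
variable {n k d : ℕ}

lemma hasFDerivAt_dipNetW (φ : ℝ → ℝ) (hφ : ContDiff ℝ 1 φ)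
    (u : EuclideanSpace ℝ (Fin d)) (V : Matrix (Fin n) (Fin k) ℝ)
    (W : EuclideanSpace ℝ (Fin k × Fin d)) :
    HasFDerivAt (dipNetW n k d φ u V) (Jmap φ u V W) W := by
  have hφd : Differentiable ℝ φ := hφ.differentiable one_ne_zero
  have key : ∀ i : Fin n,
      HasFDerivAt (fun W : EuclideanSpace ℝ (Fin k × Fin d) =>
        (1 / Real.sqrt k) * ∑ j : Fin k, V i j * φ (lfun u j W))
        ((1 / Real.sqrt k) • ∑ j : Fin k, (V i j * deriv φ (lfun u j W)) • lfun u j) W := by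
    intro i
    refine HasFDerivAt.const_mul ?_ _
    refine HasFDerivAt.fun_sum fun j _ => ?_
    have h1 : HasFDerivAt (fun W => φ (lfun u j W))
        ((deriv φ (lfun u j W)) • lfun u j) W :=
      (hφd.differentiableAt.hasDerivAt).comp_hasFDerivAt W (lfun u j).hasFDerivAt
    have h2 := h1.const_mul (V i j)
    rwa [smul_smul] at h2
  have hpi : HasFDerivAt (fun (W : EuclideanSpace ℝ (Fin k × Fin d)) (i : Fin n) =>
      (1 / Real.sqrt k) * ∑ j : Fin k, V i j * φ (lfun u j W))
      (ContinuousLinearMap.pi (fun i =>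
        (1 / Real.sqrt k) • ∑ j : Fin k, (V i j * deriv φ (lfun u j W)) • lfun u j)) W :=
    hasFDerivAt_pi.2 key
  have hcomp := (((PiLp.continuousLinearEquiv 2 ℝ (fun _ : Fin n => ℝ)).symm :
      (∀ _ : Fin n, ℝ) →L[ℝ] EuclideanSpace ℝ (Fin n)).hasFDerivAt).comp W hpi
  have hfun : dipNetW n k d φ u V =
      (((PiLp.continuousLinearEquiv 2 ℝ (fun _ : Fin n => ℝ)).symm :
        (∀ _ : Fin n, ℝ) →L[ℝ] EuclideanSpace ℝ (Fin n))) ∘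
      (fun (W : EuclideanSpace ℝ (Fin k × Fin d)) (i : Fin n) =>
        (1 / Real.sqrt k) * ∑ j : Fin k, V i j * φ (lfun u j W)) := by
    funext W; ext i
    simp only [dipNetW, Function.comp_apply, lfun_apply]
    rfl
  rw [hfun]
  exact hcomp

end aux2

lemma euclid_sum_apply {m : ℕ} {ι : Type*} [Fintype ι]
    (f : ι → EuclideanSpace ℝ (Fin m)) (i : Fin m) :
    (∑ j : ι, f j) i = ∑ j : ι, f j i :=
  map_sum (EuclideanSpace.proj (𝕜 := ℝ) i) f Finset.univ

theorem stmt18 (n k d : ℕ) (hk : 0 < k)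
    (B D : ℝ) (hB : 0 < B) (hD : 0 < D)
    (φ : ℝ → ℝ) (hφ : ContDiff ℝ 1 φ)
    (hφB : ∀ x, |deriv φ x| ≤ B)
    (hφlip : ∀ x y, |deriv φ x - deriv φ y| ≤ B * |x - y|)
    (u : EuclideanSpace ℝ (Fin d)) (hu : ‖u‖ = 1)
    (V : Matrix (Fin n) (Fin k) ℝ)
    (hVcol : ∀ j : Fin k, Real.sqrt (∑ i : Fin n, V i j ^ 2) ≤ D * Real.sqrt n) :
    ∀ W W' : EuclideanSpace ℝ (Fin k × Fin d),
      ‖fderiv ℝ (dipNetW n k d φ u V) W - fderiv ℝ (dipNetW n k d φ u V) W'‖ ≤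
        B * D * Real.sqrt ((n : ℝ) / k) * ‖W - W'‖ := by
  intro W W'
  have hJ : fderiv ℝ (dipNetW n k d φ u V) W = Jmap φ u V W :=
    (hasFDerivAt_dipNetW φ hφ u V W).fderiv
  have hJ' : fderiv ℝ (dipNetW n k d φ u V) W' = Jmap φ u V W' :=
    (hasFDerivAt_dipNetW φ hφ u V W').fderiv
  rw [hJ, hJ']
  have hknn : (0:ℝ) ≤ Real.sqrt k := Real.sqrt_nonneg _
  refine ContinuousLinearMap.opNorm_le_bound _ (by positivity) fun H => ?_
  set X := W - W' with hX
  -- coefficients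
  set c : Fin k → ℝ := fun j =>
    (deriv φ (lfun u j W) - deriv φ (lfun u j W')) * lfun u j H with hc
  -- the column vectors of V
  set colV : Fin k → EuclideanSpace ℝ (Fin n) := fun j => WithLp.toLp 2 (fun i => V i j) with hcol
  have happ : (Jmap φ u V W - Jmap φ u V W') H
      = (1 / Real.sqrt k) • ∑ j : Fin k, c j • colV j := by
    ext i
    have : ((1 / Real.sqrt k) • ∑ j : Fin k, c j • colV j) i
        = (1 / Real.sqrt k) * ∑ j : Fin k, c j * V i j := by
      have h0 : ((1 / Real.sqrt k) • ∑ j : Fin k, c j • colV j) i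
          = (1 / Real.sqrt k) * (∑ j : Fin k, c j • colV j) i := rfl
      rw [h0, euclid_sum_apply]
      congr 1
    rw [ContinuousLinearMap.sub_apply]
    show Jmap φ u V W H i - Jmap φ u V W' H i = _
    rw [this, Jmap_apply, Jmap_apply, ← mul_sub, ← Finset.sum_sub_distrib]
    congr 1
    refine Finset.sum_congr rfl fun j _ => ?_
    simp only [hc]; ring
  -- bound each |c j|
  have hcj : ∀ j : Fin k, |c j| ≤ B * (|lfun u j X| * |lfun u j H|) := by
    intro j
    have h1 : |deriv φ (lfun u j W) - deriv φ (lfun u j W')|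
        ≤ B * |lfun u j W - lfun u j W'| := hφlip _ _
    have h2 : lfun u j W - lfun u j W' = lfun u j X := by
      rw [hX, map_sub]
    calc |c j| = |deriv φ (lfun u j W) - deriv φ (lfun u j W')| * |lfun u j H| := by
          rw [hc, abs_mul]
      _ ≤ (B * |lfun u j X|) * |lfun u j H| := by
          refine mul_le_mul_of_nonneg_right ?_ (abs_nonneg _)
          rwa [h2] at h1
      _ = B * (|lfun u j X| * |lfun u j H|) := by ring
  -- bound on the lfun values
  have hlf : ∀ (Y : EuclideanSpace ℝ (Fin k × Fin d)) (j : Fin k),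
      (lfun u j Y) ^ 2 ≤ ∑ l : Fin d, Y (j, l) ^ 2 := by
    intro Y j
    set row : EuclideanSpace ℝ (Fin d) := WithLp.toLp 2 (fun l => Y (j, l)) with hrow
    have h1 : lfun u j Y = inner (𝕜 := ℝ) row u := by
      rw [lfun_apply]
      simp [hrow, PiLp.inner_apply, RCLike.inner_apply, mul_comm]
    have h2 : |lfun u j Y| ≤ ‖row‖ := by
      rw [h1]
      calc |inner (𝕜 := ℝ) row u| ≤ ‖row‖ * ‖u‖ := abs_real_inner_le_norm _ _
        _ = ‖row‖ := by rw [hu, mul_one]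
    have h3 : ‖row‖ ^ 2 = ∑ l : Fin d, Y (j, l) ^ 2 := by
      rw [EuclideanSpace.norm_eq, Real.sq_sqrt (by positivity)]
      simp [hrow, sq_abs]
    calc (lfun u j Y) ^ 2 = |lfun u j Y| ^ 2 := (sq_abs _).symm
      _ ≤ ‖row‖ ^ 2 := by
          exact pow_le_pow_left₀ (abs_nonneg _) h2 2
      _ = _ := h3
  have hsum : ∀ Y : EuclideanSpace ℝ (Fin k × Fin d),
      ∑ j : Fin k, (lfun u j Y) ^ 2 ≤ ‖Y‖ ^ 2 := by
    intro Y
    have h1 : ‖Y‖ ^ 2 = ∑ p : Fin k × Fin d, Y p ^ 2 := by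
      rw [EuclideanSpace.norm_eq, Real.sq_sqrt (by positivity)]
      simp [sq_abs]
    rw [h1, Fintype.sum_prod_type]
    exact Finset.sum_le_sum fun j _ => hlf Y j
  -- Cauchy-Schwarz
  have hCS : ∑ j : Fin k, |lfun u j X| * |lfun u j H| ≤ ‖X‖ * ‖H‖ := by
    have h1 : (∑ j : Fin k, |lfun u j X| * |lfun u j H|) ^ 2
        ≤ (∑ j : Fin k, (lfun u j X) ^ 2) * (∑ j : Fin k, (lfun u j H) ^ 2) := by
      have := Finset.sum_mul_sq_le_sq_mul_sq Finset.univ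
        (fun j => |lfun u j X|) (fun j => |lfun u j H|)
      simpa [sq_abs] using this
    have h2 : (∑ j : Fin k, |lfun u j X| * |lfun u j H|) ^ 2 ≤ (‖X‖ * ‖H‖) ^ 2 := by
      calc _ ≤ (∑ j : Fin k, (lfun u j X) ^ 2) * (∑ j : Fin k, (lfun u j H) ^ 2) := h1
        _ ≤ ‖X‖ ^ 2 * ‖H‖ ^ 2 := by
            refine mul_le_mul (hsum X) (hsum H) (by positivity) (by positivity)
        _ = (‖X‖ * ‖H‖) ^ 2 := by ring
    have h3 : 0 ≤ ∑ j : Fin k, |lfun u j X| * |lfun u j H| := by positivity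
    have h4 : (0:ℝ) ≤ ‖X‖ * ‖H‖ := by positivity
    have h5 := Real.sqrt_le_sqrt h2
    rwa [Real.sqrt_sq h3, Real.sqrt_sq h4] at h5
  -- column norms
  have hcoln : ∀ j : Fin k, ‖colV j‖ ≤ D * Real.sqrt n := by
    intro j
    have : ‖colV j‖ = Real.sqrt (∑ i : Fin n, V i j ^ 2) := by
      rw [EuclideanSpace.norm_eq]
      congr 1
      exact Finset.sum_congr rfl fun i _ => by simp [hcol, sq_abs]
    rw [this]; exact hVcol j
  -- assemble
  have hnorm : ‖(Jmap φ u V W - Jmap φ u V W') H‖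
      ≤ (1 / Real.sqrt k) * (B * (D * Real.sqrt n) * (‖X‖ * ‖H‖)) := by
    rw [happ, norm_smul]
    have h0 : ‖(1 / Real.sqrt k : ℝ)‖ = 1 / Real.sqrt k := by
      rw [Real.norm_eq_abs, abs_of_nonneg (by positivity)]
    rw [h0]
    refine mul_le_mul_of_nonneg_left ?_ (by positivity)
    calc ‖∑ j : Fin k, c j • colV j‖ ≤ ∑ j : Fin k, ‖c j • colV j‖ :=
          norm_sum_le _ _
      _ = ∑ j : Fin k, |c j| * ‖colV j‖ := by
          refine Finset.sum_congr rfl fun j _ => ?_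
          rw [norm_smul, Real.norm_eq_abs]
      _ ≤ ∑ j : Fin k, (B * (|lfun u j X| * |lfun u j H|)) * (D * Real.sqrt n) := by
          refine Finset.sum_le_sum fun j _ => ?_
          exact mul_le_mul (hcj j) (hcoln j) (norm_nonneg _)
            (by positivity)
      _ = (B * (D * Real.sqrt n)) * ∑ j : Fin k, |lfun u j X| * |lfun u j H| := by
          rw [Finset.mul_sum]; exact Finset.sum_congr rfl fun j _ => by ring
      _ ≤ (B * (D * Real.sqrt n)) * (‖X‖ * ‖H‖) := by
          refine mul_le_mul_of_nonneg_left hCS (by positivity)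
      _ = B * (D * Real.sqrt n) * (‖X‖ * ‖H‖) := by ring
  refine hnorm.trans (le_of_eq ?_)
  have hdiv : Real.sqrt ((n : ℝ) / k) = Real.sqrt n / Real.sqrt k := by
    rw [Real.sqrt_div (by positivity)]
  rw [hdiv, hX]
  field_simp
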